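/- Corollary 3.3: A linear code C of length n over R = F_p + vF_p is self-dual if and only if (i) C is self-orthogonal and (ii) dim_{F_p} C₁ = dim_{F_p} C₂ and 2·dim_{F_p} C₂ = n. -/

import Mathlib

/-- The Euclidean dual of a linear code. -/
def dualCode {S : Type*} [CommRing S] {ι : Type*} [Fintype ι]
    (C : Submodule S (ι → S)) : Submodule S (ι → S) where
  carrier := {u | ∀ w ∈ C, ∑ i, u i * w i = 0}
  zero_mem' := by intro w hw; simp
  add_mem' := by
    intro a b ha hb w hw
    simp only [Set.mem_setOf_eq] at ha hb ⊢
    simp only [Pi.add_apply, add_mul, Finset.sum_add_distrib, ha w hw, hb w hw, add_zero]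
  smul_mem' := by
    intro c a ha w hw
    simp only [Set.mem_setOf_eq] at ha ⊢
    simp only [Pi.smul_apply, smul_eq_mul, mul_assoc, ← Finset.mul_sum, ha w hw, mul_zero]

/-- The image of an `F_p` vector in `R^n`, `x̂ i = (x i, x i)`. -/
def emb {p n : ℕ} (x : Fin n → ZMod p) : Fin n → ZMod p × ZMod p := fun i => (x i, x i)

/-- `C₁ = {a ∈ F_p^n | a + vb ∈ C for some b}`. -/
def codeC1 {p n : ℕ} (C : Submodule (ZMod p × ZMod p) (Fin n → ZMod p × ZMod p)) :
    Submodule (ZMod p) (Fin n → ZMod p) where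
  carrier := {a | ∃ b : Fin n → ZMod p, (fun i => (a i, a i + b i)) ∈ C}
  zero_mem' := by
    refine ⟨0, ?_⟩
    convert C.zero_mem using 1
    funext i; simp
  add_mem' := by
    rintro a a' ⟨b, hb⟩ ⟨b', hb'⟩
    refine ⟨b + b', ?_⟩
    convert C.add_mem hb hb' using 1
    funext i
    simp [Prod.ext_iff]; ring
  smul_mem' := by
    rintro c a ⟨b, hb⟩
    refine ⟨c • b, ?_⟩
    convert C.smul_mem ((c, c) : ZMod p × ZMod p) hb using 1
    funext i
    simp [Prod.ext_iff, Prod.smul_def, smul_eq_mul]; ring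

/-- `C₂ = {a + b ∈ F_p^n | a + vb ∈ C}`. -/
def codeC2 {p n : ℕ} (C : Submodule (ZMod p × ZMod p) (Fin n → ZMod p × ZMod p)) :
    Submodule (ZMod p) (Fin n → ZMod p) where
  carrier := {s | ∃ a b : Fin n → ZMod p, (fun i => (a i, a i + b i)) ∈ C ∧ s = a + b}
  zero_mem' := by
    refine ⟨0, 0, ?_, by simp⟩
    convert C.zero_mem using 1
    funext i; simp
  add_mem' := by
    rintro s s' ⟨a, b, hb, rfl⟩ ⟨a', b', hb', rfl⟩
    refine ⟨a + a', b + b', ?_, by abel⟩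
    convert C.add_mem hb hb' using 1
    funext i
    simp [Prod.ext_iff]; ring
  smul_mem' := by
    rintro c s ⟨a, b, hb, rfl⟩
    refine ⟨c • a, c • b, ?_, by simp [smul_add]⟩
    convert C.smul_mem ((c, c) : ZMod p × ZMod p) hb using 1
    funext i
    simp [Prod.ext_iff, Prod.smul_def, smul_eq_mul]; ring

lemma mem_dualCode' {S : Type*} [CommRing S] {ι : Type*} [Fintype ι]
    (C : Submodule S (ι → S)) (u : ι → S) :
    u ∈ dualCode C ↔ ∀ w ∈ C, ∑ i, u i * w i = 0 := Iff.rfl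

noncomputable def dotMap (K : Type*) [CommRing K] (n : ℕ) :
    (Fin n → K) →ₗ[K] Module.Dual K (Fin n → K) where
  toFun u :=
    { toFun := fun w => ∑ i, u i * w i
      map_add' := fun w w' => by simp [mul_add, Finset.sum_add_distrib]
      map_smul' := fun c w => by
        simp only [Pi.smul_apply, smul_eq_mul, RingHom.id_apply, Finset.mul_sum]
        exact Finset.sum_congr rfl fun i _ => by ring }
  map_add' u u' := by
    ext w; simp [add_mul, Finset.sum_add_distrib]
  map_smul' c u := by
    refine LinearMap.ext fun w => ?_
    simp only [Pi.smul_apply, smul_eq_mul, RingHom.id_apply, LinearMap.coe_mk,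
      AddHom.coe_mk, LinearMap.smul_apply, Finset.mul_sum]
    exact Finset.sum_congr rfl fun i _ => by ring

lemma dotMap_injective (K : Type*) [Field K] (n : ℕ) : Function.Injective (dotMap K n) := by
  rw [injective_iff_map_eq_zero]
  intro u hu
  funext j
  have := congrArg (fun f => f (Pi.single j 1)) hu
  simpa [dotMap, Pi.single_apply, Finset.sum_ite_eq', mul_ite] using this

noncomputable def dotEquiv (K : Type*) [Field K] (n : ℕ) :
    (Fin n → K) ≃ₗ[K] Module.Dual K (Fin n → K) :=
  LinearEquiv.ofBijective (dotMap K n)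
    ⟨dotMap_injective K n,
      (LinearMap.injective_iff_surjective_of_finrank_eq_finrank
        (by rw [Subspace.dual_finrank_eq])).1 (dotMap_injective K n)⟩

lemma dualCode_eq_comap (K : Type*) [Field K] (n : ℕ) (A : Submodule K (Fin n → K)) :
    dualCode A = (Submodule.dualAnnihilator A).comap (dotMap K n) := by
  ext u
  simp only [mem_dualCode', Submodule.mem_comap, Submodule.mem_dualAnnihilator]
  rfl

lemma finrank_dualCode (K : Type*) [Field K] (n : ℕ) (A : Submodule K (Fin n → K)) :
    Module.finrank K (dualCode A) + Module.finrank K A = n := by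
  have h1 : Module.finrank K (dualCode A) = Module.finrank K (Submodule.dualAnnihilator A) := by
    rw [dualCode_eq_comap]
    have hc : (Submodule.dualAnnihilator A).comap (dotMap K n)
        = (Submodule.dualAnnihilator A).comap ((dotEquiv K n : (Fin n → K) →ₗ[K] _)) := rfl
    rw [hc, Submodule.comap_equiv_eq_map_symm,
      LinearEquiv.finrank_map_eq (dotEquiv K n).symm (Submodule.dualAnnihilator A)]
  have h2 : Module.finrank K A + Module.finrank K (Submodule.dualAnnihilator A) =
      Module.finrank K (Fin n → K) := by
    have e := LinearEquiv.finrank_eq (R := K) (M := (Fin n → K) ⧸ A)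
      (N := A.dualAnnihilator) (Subspace.quotEquivAnnihilator A)
    rw [← e, add_comm, Submodule.finrank_quotient_add_finrank]
  rw [h1, add_comm, h2]
  simp

lemma selfDual_iff_field (K : Type*) [Field K] (n : ℕ) (A : Submodule K (Fin n → K)) :
    A = dualCode A ↔ (A ≤ dualCode A ∧ 2 * Module.finrank K A = n) := by
  constructor
  · intro h
    refine ⟨h.le, ?_⟩
    have := finrank_dualCode K n A
    rw [← h] at this
    omega
  · rintro ⟨hle, hdim⟩
    have := finrank_dualCode K n A
    exact Submodule.eq_of_le_of_finrank_eq hle (by omega)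

section decomp
variable {p n : ℕ}

lemma mem_codeC1 (C : Submodule (ZMod p × ZMod p) (Fin n → ZMod p × ZMod p))
    (a : Fin n → ZMod p) :
    a ∈ codeC1 C ↔ ∃ u ∈ C, ∀ i, (u i).1 = a i := by
  constructor
  · rintro ⟨b, hb⟩
    exact ⟨_, hb, fun i => rfl⟩
  · rintro ⟨u, hu, h⟩
    refine ⟨fun i => (u i).2 - a i, ?_⟩
    convert hu using 1
    funext i
    simp [← h i]

lemma mem_codeC2 (C : Submodule (ZMod p × ZMod p) (Fin n → ZMod p × ZMod p))
    (s : Fin n → ZMod p) :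
    s ∈ codeC2 C ↔ ∃ u ∈ C, ∀ i, (u i).2 = s i := by
  constructor
  · rintro ⟨a, b, hb, rfl⟩
    exact ⟨_, hb, fun i => rfl⟩
  · rintro ⟨u, hu, h⟩
    refine ⟨fun i => (u i).1, fun i => (u i).2 - (u i).1, ?_, ?_⟩
    · convert hu using 1
      funext i
      simp
    · funext i
      simp [← h i]

lemma mem_decomp (C : Submodule (ZMod p × ZMod p) (Fin n → ZMod p × ZMod p))
    (u : Fin n → ZMod p × ZMod p) :
    u ∈ C ↔ (fun i => (u i).1) ∈ codeC1 C ∧ (fun i => (u i).2) ∈ codeC2 C := by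
  constructor
  · intro hu
    exact ⟨(mem_codeC1 C _).2 ⟨u, hu, fun i => rfl⟩, (mem_codeC2 C _).2 ⟨u, hu, fun i => rfl⟩⟩
  · rintro ⟨h1, h2⟩
    obtain ⟨x, hx, hx1⟩ := (mem_codeC1 C _).1 h1
    obtain ⟨y, hy, hy2⟩ := (mem_codeC2 C _).1 h2
    have hmem := C.add_mem (C.smul_mem ((1, 0) : ZMod p × ZMod p) hx)
      (C.smul_mem ((0, 1) : ZMod p × ZMod p) hy)
    convert hmem using 1
    funext i
    have e1 := hx1 i
    have e2 := hy2 i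
    simp only [Pi.add_apply, Pi.smul_apply, Prod.smul_def, smul_eq_mul, Prod.ext_iff,
      Prod.fst_add, Prod.snd_add, Prod.fst_mul, Prod.snd_mul] at *
    constructor <;> simp [← e1, ← e2]

lemma mem_dual_decomp (C : Submodule (ZMod p × ZMod p) (Fin n → ZMod p × ZMod p))
    (u : Fin n → ZMod p × ZMod p) :
    u ∈ dualCode C ↔ (fun i => (u i).1) ∈ dualCode (codeC1 C) ∧
      (fun i => (u i).2) ∈ dualCode (codeC2 C) := by
  constructor
  · intro hu
    constructor
    · intro a ha
      obtain ⟨w, hw, hw1⟩ := (mem_codeC1 C _).1 ha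
      have h := congrArg Prod.fst (hu w hw)
      rw [Prod.fst_sum] at h
      simpa [Prod.fst_mul, hw1] using h
    · intro s hs
      obtain ⟨w, hw, hw2⟩ := (mem_codeC2 C _).1 hs
      have h := congrArg Prod.snd (hu w hw)
      rw [Prod.snd_sum] at h
      simpa [Prod.snd_mul, hw2] using h
  · rintro ⟨h1, h2⟩ w hw
    obtain ⟨hw1, hw2⟩ := (mem_decomp C w).1 hw
    have e1 := h1 _ hw1
    have e2 := h2 _ hw2
    have : (∑ i, u i * w i).1 = 0 ∧ (∑ i, u i * w i).2 = 0 := by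
      rw [Prod.fst_sum, Prod.snd_sum]
      constructor
      · simpa [Prod.fst_mul] using e1
      · simpa [Prod.snd_mul] using e2
    exact Prod.ext this.1 this.2

end decomp

section main
variable (p n : ℕ) [Fact p.Prime]

lemma dual_pair_iff (C : Submodule (ZMod p × ZMod p) (Fin n → ZMod p × ZMod p)) :
    C = dualCode C ↔
      (codeC1 C = dualCode (codeC1 C) ∧ codeC2 C = dualCode (codeC2 C)) := by
  constructor
  · intro h
    constructor
    · ext a
      constructor
      · intro ha
        obtain ⟨w, hw, hw1⟩ := (mem_codeC1 C _).1 ha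
        rw [h] at hw
        have := ((mem_dual_decomp C w).1 hw).1
        have hfe : (fun i => (w i).1) = a := funext hw1
        rwa [hfe] at this
      · intro ha
        have hu : (fun i => ((a i, (0 : ZMod p)) : ZMod p × ZMod p)) ∈ dualCode C := by
          rw [mem_dual_decomp]
          exact ⟨ha, (dualCode (codeC2 C)).zero_mem⟩
        rw [← h] at hu
        exact (mem_codeC1 C a).2 ⟨_, hu, fun i => rfl⟩
    · ext s
      constructor
      · intro hs
        obtain ⟨w, hw, hw2⟩ := (mem_codeC2 C _).1 hs
        rw [h] at hw
        have := ((mem_dual_decomp C w).1 hw).2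
        have hfe : (fun i => (w i).2) = s := funext hw2
        rwa [hfe] at this
      · intro hs
        have hu : (fun i => (((0 : ZMod p), s i) : ZMod p × ZMod p)) ∈ dualCode C := by
          rw [mem_dual_decomp]
          exact ⟨(dualCode (codeC1 C)).zero_mem, hs⟩
        rw [← h] at hu
        exact (mem_codeC2 C s).2 ⟨_, hu, fun i => rfl⟩
  · rintro ⟨h1, h2⟩
    ext u
    rw [mem_decomp, mem_dual_decomp, ← h1, ← h2]

lemma le_dual_pair_iff (C : Submodule (ZMod p × ZMod p) (Fin n → ZMod p × ZMod p)) :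
    C ≤ dualCode C ↔
      (codeC1 C ≤ dualCode (codeC1 C) ∧ codeC2 C ≤ dualCode (codeC2 C)) := by
  constructor
  · intro h
    constructor
    · intro a ha
      obtain ⟨w, hw, hw1⟩ := (mem_codeC1 C _).1 ha
      have := ((mem_dual_decomp C w).1 (h hw)).1
      have hfe : (fun i => (w i).1) = a := funext hw1
      rwa [hfe] at this
    · intro s hs
      obtain ⟨w, hw, hw2⟩ := (mem_codeC2 C _).1 hs
      have := ((mem_dual_decomp C w).1 (h hw)).2
      have hfe : (fun i => (w i).2) = s := funext hw2
      rwa [hfe] at this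
  · rintro ⟨h1, h2⟩ u hu
    obtain ⟨hu1, hu2⟩ := (mem_decomp C u).1 hu
    exact (mem_dual_decomp C u).2 ⟨h1 hu1, h2 hu2⟩

end main


/-- Corollary 3.3: a linear code `C` of length `n` over `R = F_p + vF_p` is self-dual iff
(i) `C` is self-orthogonal and (ii) `dim C₁ = dim C₂` and `2 · dim C₂ = n`
(equivalently, `n = 2(k₁+k₂)` and `k₂ = k₃`). -/
theorem selfDual_iff_selfOrthogonal_and_dims (p n : ℕ) [Fact p.Prime]
    (C : Submodule (ZMod p × ZMod p) (Fin n → ZMod p × ZMod p)) :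
    C = dualCode C ↔
      (C ≤ dualCode C ∧
        Module.finrank (ZMod p) (codeC1 C) = Module.finrank (ZMod p) (codeC2 C) ∧
        2 * Module.finrank (ZMod p) (codeC2 C) = n) := by
  rw [dual_pair_iff, le_dual_pair_iff,
    selfDual_iff_field (ZMod p) n (codeC1 C), selfDual_iff_field (ZMod p) n (codeC2 C)]
  constructor
  · rintro ⟨⟨l1, d1⟩, ⟨l2, d2⟩⟩
    exact ⟨⟨l1, l2⟩, by omega, d2⟩
  · rintro ⟨⟨l1, l2⟩, heq, d2⟩
    exact ⟨⟨l1, by omega⟩, ⟨l2, d2⟩⟩
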